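/- Let (s_n) be a sequence of positive reals and suppose there exist ε ∈ (0,1), P₀ > 0, and a finite constant C such that for all P and all Lebesgue measurable E ⊆ ℝ, the upper density of {t ∈ ℝ : max_{P₀ ≤ N ≤ P} (1/N)∑_{n≤N} 1_E(s_n + t) ≥ 1−ε} is at most C times the upper density of E. Then for every measure-preserving flow (U_t) on a probability space (X̃, β, 𝔪) and every Ẽ ∈ β, 𝔪{x : max_{P₀ ≤ N ≤ P} (1/N)∑_{n≤N} 1_{Ẽ}(U_{s_n} x) ≥ 1−ε} ≤ C·𝔪(Ẽ). -/

import Mathlib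

open MeasureTheory

/-- Upper density of a measurable subset of `ℝ`:
`limsup_{J→∞} (1/J)·λ(B ∩ [0,J])`. -/
noncomputable def upperDensity (B : Set ℝ) : ℝ :=
  Filter.limsup (fun J : ℕ => (volume (B ∩ Set.Icc (0 : ℝ) J)).toReal / J) Filter.atTop

open Filter Set
open scoped ENNReal

/-- ENNReal-valued upper density. -/
noncomputable def eDen (B : Set ℝ) : ℝ≥0∞ :=
  Filter.limsup (fun J : ℕ => volume (B ∩ Set.Icc (0 : ℝ) J) / (J : ℝ≥0∞)) Filter.atTop

lemma vol_inter_Icc_le (B : Set ℝ) (J : ℕ) :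
    volume (B ∩ Set.Icc (0 : ℝ) J) ≤ (J : ℝ≥0∞) := by
  refine le_trans (measure_mono inter_subset_right) ?_
  rw [Real.volume_Icc]
  simp

lemma eDen_term_le_one (B : Set ℝ) (J : ℕ) :
    volume (B ∩ Set.Icc (0 : ℝ) J) / (J : ℝ≥0∞) ≤ 1 := by
  rcases Nat.eq_zero_or_pos J with rfl | hJ
  · have h0 : volume (B ∩ {(0:ℝ)}) = 0 :=
      le_antisymm (le_trans (measure_mono inter_subset_right) (by simp)) zero_le
    simp [h0]
  · refine ENNReal.div_le_of_le_mul ?_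
    simpa using vol_inter_Icc_le B J

lemma eDen_le_one (B : Set ℝ) : eDen B ≤ 1 := by
  refine le_trans (Filter.limsup_le_limsup (Filter.Eventually.of_forall (eDen_term_le_one B))) ?_
  simp [Filter.limsup_const]

lemma eDen_eq_ofReal (B : Set ℝ) : eDen B = ENNReal.ofReal (upperDensity B) := by
  have hfun : (fun J : ℕ => volume (B ∩ Set.Icc (0 : ℝ) J) / (J : ℝ≥0∞))
      = fun J : ℕ => ENNReal.ofReal ((volume (B ∩ Set.Icc (0 : ℝ) J)).toReal / J) := by
    funext J
    rcases Nat.eq_zero_or_pos J with rfl | hJ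
    · have h0 : volume (B ∩ {(0:ℝ)}) = 0 :=
        le_antisymm (le_trans (measure_mono inter_subset_right) (by simp)) zero_le
      simp [h0]
    · have hfin : volume (B ∩ Set.Icc (0 : ℝ) J) ≠ ⊤ :=
        (lt_of_le_of_lt (vol_inter_Icc_le B J) (by simp)).ne
      have hJ' : (0:ℝ) < J := by exact_mod_cast hJ
      rw [ENNReal.ofReal_div_of_pos hJ', ENNReal.ofReal_toReal hfin, ENNReal.ofReal_natCast]
  rw [eDen, hfun, upperDensity]
  have hb : IsBoundedUnder (· ≤ ·) atTop
      (fun J : ℕ => (volume (B ∩ Set.Icc (0 : ℝ) J)).toReal / J) := by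
    refine ⟨1, Filter.eventually_map.2 (Filter.Eventually.of_forall fun J => ?_)⟩
    rcases Nat.eq_zero_or_pos J with rfl | hJ
    · simp
    · have hJ' : (0:ℝ) < J := by exact_mod_cast hJ
      rw [div_le_one hJ']
      have := vol_inter_Icc_le B J
      calc (volume (B ∩ Set.Icc (0 : ℝ) J)).toReal
          ≤ ((J : ℝ≥0∞)).toReal := ENNReal.toReal_mono (by simp) this
        _ = J := by simp
  have hcb : IsCoboundedUnder (· ≤ ·) atTop
      (fun J : ℕ => (volume (B ∩ Set.Icc (0 : ℝ) J)).toReal / J) := by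
    refine Filter.IsBoundedUnder.isCoboundedUnder_le ⟨0, Filter.eventually_map.2 ?_⟩
    exact Filter.Eventually.of_forall fun J =>
      div_nonneg ENNReal.toReal_nonneg (Nat.cast_nonneg J)
  exact (Monotone.map_limsup_of_continuousAt (F := atTop)
    (fun _ _ hab => ENNReal.ofReal_le_ofReal hab) _ ENNReal.continuous_ofReal.continuousAt hb hcb).symm

lemma limsup_add_const_le' (u : ℕ → ℝ≥0∞) (γ : ℝ≥0∞) :
    Filter.limsup (fun J => u J + γ) Filter.atTop ≤ Filter.limsup u Filter.atTop + γ := by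
  rw [limsup_add_const Filter.atTop u γ Filter.isBounded_le_of_top
    Filter.isCobounded_le_of_bot]

lemma limsup_div_le_of_le_add (a b : ℕ → ℝ≥0∞) (τ : ℝ≥0∞) (hτ : τ ≠ ⊤)
    (h : ∀ J, a J ≤ b J + τ) :
    Filter.limsup (fun J : ℕ => a J / J) Filter.atTop
      ≤ Filter.limsup (fun J : ℕ => b J / J) Filter.atTop := by
  refine ENNReal.le_of_forall_pos_le_add fun ε hε _ => ?_
  have hτε : τ / (ε : ℝ≥0∞) ≠ ⊤ := by
    exact (ENNReal.div_lt_top hτ (by exact_mod_cast hε.ne')).ne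
  obtain ⟨n₀, hn₀⟩ := ENNReal.exists_nat_gt hτε
  have hev : ∀ᶠ J : ℕ in Filter.atTop, a J / J ≤ b J / J + (ε : ℝ≥0∞) := by
    filter_upwards [Filter.eventually_ge_atTop (max n₀ 1)] with J hJ
    have hJn : (n₀ : ℝ≥0∞) ≤ (J : ℝ≥0∞) := by
      exact_mod_cast le_trans (le_max_left _ _) hJ
    have hτJ : τ / (J : ℝ≥0∞) ≤ (ε : ℝ≥0∞) := by
      refine ENNReal.div_le_of_le_mul ?_
      have h1 : τ ≤ (n₀ : ℝ≥0∞) * (ε : ℝ≥0∞) := by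
        rw [← ENNReal.div_le_iff_le_mul (Or.inl (by exact_mod_cast hε.ne'))
          (Or.inl (by simp))]
        exact hn₀.le
      calc τ ≤ (n₀ : ℝ≥0∞) * ε := h1
        _ ≤ (J : ℝ≥0∞) * ε := by gcongr
        _ = ε * (J : ℝ≥0∞) := mul_comm _ _
    calc a J / J ≤ (b J + τ) / J := by gcongr; exact h J
      _ = b J / J + τ / J := ENNReal.add_div
      _ ≤ b J / J + ε := by gcongr
  calc Filter.limsup (fun J : ℕ => a J / J) Filter.atTop
      ≤ Filter.limsup (fun J : ℕ => b J / J + (ε:ℝ≥0∞)) Filter.atTop :=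
        Filter.limsup_le_limsup hev
    _ ≤ _ := limsup_add_const_le' _ _

lemma cover_lemma (B S : Set ℝ) (hB : MeasurableSet B) (c : ℝ≥0∞) (hc : c ≤ 1)
    (M L : ℕ)
    (hS : ∀ t ∈ S, 0 ≤ t ∧ t ≤ (L : ℝ) ∧ ∃ J : ℕ, 1 ≤ J ∧ J ≤ M ∧
      c * J ≤ volume (B ∩ Icc t (t + J))) :
    c * volume S ≤ volume (B ∩ Icc (0 : ℝ) ((L : ℝ) + M + 1)) := by
  set Q : ℝ := (L : ℝ) + M + 1 with hQ
  refine ENNReal.le_of_forall_pos_le_add fun ε hε _ => ?_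
  set η : ℝ := min 1 ((ε : ℝ) / (L + 1)) with hη
  have hη0 : 0 < η := by
    refine lt_min one_pos (div_pos ?_ (by positivity))
    exact_mod_cast hε
  have key : ∀ k : ℕ, ∀ r : ℝ, 0 ≤ r → (L : ℝ) < r + k →
      c * volume (S ∩ Ici r) ≤ volume (B ∩ Ioc r Q) + k * ENNReal.ofReal η := by
    intro k
    induction k with
    | zero =>
      intro r hr0 hrL
      have : S ∩ Ici r = ∅ := by
        ext t; simp only [mem_inter_iff, mem_Ici, mem_empty_iff_false, iff_false]
        rintro ⟨htS, hrt⟩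
        have := (hS t htS).2.1
        simp at hrL
        linarith
      simp [this]
    | succ k ih =>
      intro r hr0 hrL
      by_cases hne : (S ∩ Ici r).Nonempty
      · have hbdd : BddBelow (S ∩ Ici r) := ⟨r, fun u hu => hu.2⟩
        set v : ℝ := sInf (S ∩ Ici r) with hv
        have hrv : r ≤ v := le_csInf hne fun u hu => hu.2
        obtain ⟨t, htmem, htlt⟩ := Real.lt_sInf_add_pos hne hη0
        obtain ⟨htS, hrt⟩ := htmem
        have hvt : v ≤ t := csInf_le hbdd ⟨htS, hrt⟩
        obtain ⟨ht0, htL, J, hJ1, hJM, hcJ⟩ := hS t htS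
        set r' : ℝ := t + J with hr'
        have hvL : v ≤ (L : ℝ) := le_trans hvt htL
        have hr'0 : (0 : ℝ) ≤ r' := by positivity
        have hJ1' : (1 : ℝ) ≤ (J : ℝ) := by exact_mod_cast hJ1
        have hLr'k : (L : ℝ) < r' + k := by
          push_cast at hrL ⊢
          have : r ≤ t := hrt
          linarith
        have hr'Q : r' ≤ Q := by
          have hJM' : (J : ℝ) ≤ (M : ℝ) := by exact_mod_cast hJM
          have hη1 : η ≤ 1 := min_le_left _ _
          rw [hQ]
          linarith
        have htr' : t ≤ r' := by linarith
        have hcov : S ∩ Ici r ⊆ Icc v r' ∪ (S ∩ Ici r') := by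
          rintro u ⟨huS, hru⟩
          have hvu : v ≤ u := csInf_le hbdd ⟨huS, hru⟩
          rcases le_or_gt u r' with hcase | hcase
          · exact Or.inl ⟨hvu, hcase⟩
          · exact Or.inr ⟨huS, hcase.le⟩
        have hm1 : volume (S ∩ Ici r) ≤ volume (Icc v r') + volume (S ∩ Ici r') :=
          le_trans (measure_mono hcov) (measure_union_le _ _)
        have hBIoc : c * (J : ℝ≥0∞) ≤ volume (B ∩ Ioc t r') := by
          refine le_trans hcJ ?_
          have hsub : B ∩ Icc t r' ⊆ (B ∩ {t}) ∪ (B ∩ Ioc t r') := by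
            rintro u ⟨huB, hu1, hu2⟩
            rcases eq_or_lt_of_le hu1 with hcase | hcase
            · exact Or.inl ⟨huB, by simp [← hcase]⟩
            · exact Or.inr ⟨huB, hcase, hu2⟩
          calc volume (B ∩ Icc t r') ≤ volume (B ∩ {t}) + volume (B ∩ Ioc t r') :=
                le_trans (measure_mono hsub) (measure_union_le _ _)
            _ ≤ 0 + volume (B ∩ Ioc t r') := by
                gcongr
                exact le_trans (measure_mono inter_subset_right) (by simp)
            _ = volume (B ∩ Ioc t r') := by rw [zero_add]
        have hIcc : c * volume (Icc v r') ≤ ENNReal.ofReal η + volume (B ∩ Ioc t r') := by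
          calc c * volume (Icc v r') = c * ENNReal.ofReal (r' - v) := by rw [Real.volume_Icc]
            _ ≤ c * (ENNReal.ofReal η + (J : ℝ≥0∞)) := by
                gcongr
                calc ENNReal.ofReal (r' - v) ≤ ENNReal.ofReal (η + J) :=
                      ENNReal.ofReal_le_ofReal (by linarith)
                  _ = ENNReal.ofReal η + ENNReal.ofReal (J : ℝ) :=
                      ENNReal.ofReal_add hη0.le (by positivity)
                  _ = ENNReal.ofReal η + (J : ℝ≥0∞) := by rw [ENNReal.ofReal_natCast]
            _ = c * ENNReal.ofReal η + c * (J : ℝ≥0∞) := mul_add _ _ _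
            _ ≤ 1 * ENNReal.ofReal η + volume (B ∩ Ioc t r') := by
                gcongr
            _ = ENNReal.ofReal η + volume (B ∩ Ioc t r') := by rw [one_mul]
        have hsum : volume (B ∩ Ioc t r') + volume (B ∩ Ioc r' Q) ≤ volume (B ∩ Ioc r Q) := by
          have hdisj : Disjoint (B ∩ Ioc t r') (B ∩ Ioc r' Q) := by
            refine Set.disjoint_left.2 ?_
            rintro u ⟨_, _, hu2⟩ ⟨_, hu3, _⟩
            exact absurd hu3 (not_lt.2 hu2)
          rw [← measure_union hdisj (hB.inter measurableSet_Ioc)]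
          refine measure_mono ?_
          rintro u (⟨huB, hu1, hu2⟩ | ⟨huB, hu1, hu2⟩)
          · exact ⟨huB, lt_of_le_of_lt hrt hu1, le_trans hu2 hr'Q⟩
          · exact ⟨huB, lt_of_le_of_lt (le_trans hrt htr') hu1, hu2⟩
        calc c * volume (S ∩ Ici r) ≤ c * (volume (Icc v r') + volume (S ∩ Ici r')) :=
              mul_le_mul_right hm1 c
          _ = c * volume (Icc v r') + c * volume (S ∩ Ici r') := mul_add _ _ _
          _ ≤ (ENNReal.ofReal η + volume (B ∩ Ioc t r'))
              + (volume (B ∩ Ioc r' Q) + k * ENNReal.ofReal η) :=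
              add_le_add hIcc (ih r' hr'0 hLr'k)
          _ = (volume (B ∩ Ioc t r') + volume (B ∩ Ioc r' Q))
              + (k + 1 : ℕ) * ENNReal.ofReal η := by push_cast; ring
          _ ≤ volume (B ∩ Ioc r Q) + (k + 1 : ℕ) * ENNReal.ofReal η :=
              add_le_add_left hsum _
      · rw [Set.not_nonempty_iff_eq_empty.1 hne]
        simp
  have hS0 : S ∩ Ici (0 : ℝ) = S := inter_eq_left.2 fun t ht => (hS t ht).1
  have hkey := key (L + 1) 0 le_rfl (by push_cast; linarith)
  rw [hS0] at hkey
  refine le_trans hkey (add_le_add ?_ ?_)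
  · exact measure_mono (inter_subset_inter_right _ Ioc_subset_Icc_self)
  · have h1 : ENNReal.ofReal η ≤ ENNReal.ofReal ((ε : ℝ) / (L + 1)) :=
      ENNReal.ofReal_le_ofReal (min_le_right _ _)
    calc ((L + 1 : ℕ) : ℝ≥0∞) * ENNReal.ofReal η
        ≤ ((L + 1 : ℕ) : ℝ≥0∞) * ENNReal.ofReal ((ε : ℝ) / (L + 1)) := by gcongr
      _ = ENNReal.ofReal ((L + 1 : ℝ)) * ENNReal.ofReal ((ε : ℝ) / (L + 1)) := by
          rw [ENNReal.ofReal_add (by positivity) zero_le_one]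
          push_cast
          simp [ENNReal.ofReal_natCast, ENNReal.ofReal_one]
      _ = ENNReal.ofReal ((L + 1 : ℝ) * ((ε : ℝ) / (L + 1))) :=
          (ENNReal.ofReal_mul (by positivity)).symm
      _ = ENNReal.ofReal (ε : ℝ) := by congr 1; field_simp
      _ = (ε : ℝ≥0∞) := ENNReal.ofReal_coe_nnreal

section Flow
variable {X : Type*} [MeasurableSpace X] {μ : Measure X} {U : ℝ → X → X}

lemma measurable_sect (hUmeas : Measurable fun p : ℝ × X => U p.1 p.2) (x : X) :
    Measurable fun t : ℝ => U t x :=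
  hUmeas.comp (measurable_id.prodMk measurable_const)

lemma vol_eq_lintegral (hUmeas : Measurable fun p : ℝ × X => U p.1 p.2)
    {D : Set X} (hD : MeasurableSet D) (a : ℝ) (x : X) :
    volume ({t : ℝ | U t x ∈ D} ∩ Icc (0 : ℝ) a)
      = ∫⁻ t in Icc (0 : ℝ) a, D.indicator (fun _ => (1 : ℝ≥0∞)) (U t x) := by
  have hT : MeasurableSet {t : ℝ | U t x ∈ D} := (measurable_sect hUmeas x) hD
  rw [← Measure.restrict_apply hT, ← lintegral_indicator_one hT]
  refine lintegral_congr fun t => ?_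
  by_cases htD : U t x ∈ D <;> simp [Set.indicator_apply, htD]

lemma meas_vol (hUmeas : Measurable fun p : ℝ × X => U p.1 p.2)
    {D : Set X} (hD : MeasurableSet D) (a : ℝ) :
    Measurable fun x => volume ({t : ℝ | U t x ∈ D} ∩ Icc (0 : ℝ) a) := by
  have : (fun x => volume ({t : ℝ | U t x ∈ D} ∩ Icc (0 : ℝ) a))
      = fun x => ∫⁻ t in Icc (0 : ℝ) a, D.indicator (fun _ => (1 : ℝ≥0∞)) (U t x) :=
    funext fun x => vol_eq_lintegral hUmeas hD a x
  rw [this]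
  refine Measurable.lintegral_prod_right (f := fun x t => D.indicator (fun _ => (1 : ℝ≥0∞)) (U t x)) ?_
  exact (measurable_const.indicator hD).comp (hUmeas.comp measurable_swap)

lemma fubini_flow [IsProbabilityMeasure μ]
    (hUmp : ∀ t, MeasurePreserving (U t) μ μ)
    (hUmeas : Measurable fun p : ℝ × X => U p.1 p.2)
    {D : Set X} (hD : MeasurableSet D) (a : ℝ) (ha : 0 ≤ a) :
    ∫⁻ x, volume ({t : ℝ | U t x ∈ D} ∩ Icc (0 : ℝ) a) ∂μ = ENNReal.ofReal a * μ D := by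
  calc ∫⁻ x, volume ({t : ℝ | U t x ∈ D} ∩ Icc (0 : ℝ) a) ∂μ
      = ∫⁻ x, (∫⁻ t in Icc (0 : ℝ) a, D.indicator (fun _ => (1 : ℝ≥0∞)) (U t x)) ∂μ :=
        lintegral_congr fun x => vol_eq_lintegral hUmeas hD a x
    _ = ∫⁻ t in Icc (0 : ℝ) a, (∫⁻ x, D.indicator (fun _ => (1 : ℝ≥0∞)) (U t x) ∂μ) := by
        refine lintegral_lintegral_swap ?_
        exact (((measurable_const.indicator hD).comp (hUmeas.comp measurable_swap))).aemeasurable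
    _ = ∫⁻ _ in Icc (0 : ℝ) a, μ D := by
        refine lintegral_congr fun t => ?_
        have h1 : (fun x => D.indicator (fun _ => (1 : ℝ≥0∞)) (U t x))
            = (U t ⁻¹' D).indicator (fun _ => (1 : ℝ≥0∞)) := by
          funext x
          by_cases hx : U t x ∈ D <;> simp [Set.indicator_apply, hx]
        rw [h1]
        have h2 : ∫⁻ x, (U t ⁻¹' D).indicator (fun _ => (1 : ℝ≥0∞)) x ∂μ = μ (U t ⁻¹' D) :=
          lintegral_indicator_one ((hUmp t).measurable hD)
        rw [h2, (hUmp t).measure_preimage hD.nullMeasurableSet]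
    _ = ENNReal.ofReal a * μ D := by
        rw [setLIntegral_const, Real.volume_Icc, mul_comm]
        congr 1
        simp

lemma meas_eDen (hUmeas : Measurable fun p : ℝ × X => U p.1 p.2)
    {D : Set X} (hD : MeasurableSet D) :
    Measurable fun x => eDen {t : ℝ | U t x ∈ D} := by
  simp only [eDen, Filter.limsup_eq_iInf_iSup_of_nat]
  refine Measurable.iInf fun n => Measurable.iSup fun i => Measurable.iSup fun _ => ?_
  exact (meas_vol hUmeas hD _).div_const _

lemma vol_shift (hUadd : ∀ t u, U (t + u) = U t ∘ U u)
    {D : Set X} (x : X) (t b : ℝ) :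
    volume ({w : ℝ | U w (U t x) ∈ D} ∩ Icc (0 : ℝ) b)
      = volume ({w : ℝ | U w x ∈ D} ∩ Icc t (t + b)) := by
  have hsetid : {w : ℝ | U w (U t x) ∈ D} ∩ Icc (0 : ℝ) b
      = (fun w => w + t) ⁻¹' ({w : ℝ | U w x ∈ D} ∩ Icc t (t + b)) := by
    ext w
    simp only [mem_inter_iff, mem_setOf_eq, mem_preimage, mem_Icc]
    have hcomp : U (w + t) x = U w (U t x) := by rw [hUadd w t]; rfl
    rw [hcomp]
    constructor
    · rintro ⟨h1, h2, h3⟩; exact ⟨h1, by linarith, by linarith⟩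
    · rintro ⟨h1, h2, h3⟩; exact ⟨h1, by linarith, by linarith⟩
  rw [hsetid, measure_preimage_add_right]

lemma eDen_inv (hUadd : ∀ t u, U (t + u) = U t ∘ U u)
    {D : Set X} (x : X) (t : ℝ) (ht : 0 ≤ t) :
    eDen {w : ℝ | U w (U t x) ∈ D} = eDen {w : ℝ | U w x ∈ D} := by
  set B := {w : ℝ | U w x ∈ D} with hB
  have h1 : (fun J : ℕ => volume ({w : ℝ | U w (U t x) ∈ D} ∩ Icc (0 : ℝ) J) / (J : ℝ≥0∞))
      = fun J : ℕ => volume (B ∩ Icc t (t + J)) / (J : ℝ≥0∞) :=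
    funext fun J => by rw [vol_shift hUadd x t (J : ℝ)]
  have hab : ∀ J : ℕ, volume (B ∩ Icc t (t + J)) ≤ volume (B ∩ Icc (0 : ℝ) J)
      + ENNReal.ofReal t := by
    intro J
    have hsub : B ∩ Icc t (t + J) ⊆ (B ∩ Icc (0 : ℝ) J) ∪ Icc (J : ℝ) (t + J) := by
      rintro u ⟨huB, hu1, hu2⟩
      rcases le_or_gt u J with hc | hc
      · exact Or.inl ⟨huB, le_trans ht hu1, hc⟩
      · exact Or.inr ⟨hc.le, hu2⟩
    refine le_trans (measure_mono hsub) (le_trans (measure_union_le _ _) ?_)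
    gcongr
    rw [Real.volume_Icc]
    exact ENNReal.ofReal_le_ofReal (by linarith)
  have hba : ∀ J : ℕ, volume (B ∩ Icc (0 : ℝ) J) ≤ volume (B ∩ Icc t (t + J))
      + ENNReal.ofReal t := by
    intro J
    have hsub : B ∩ Icc (0 : ℝ) J ⊆ (B ∩ Icc t (t + J)) ∪ Icc (0 : ℝ) t := by
      rintro u ⟨huB, hu1, hu2⟩
      rcases le_or_gt u t with hc | hc
      · exact Or.inr ⟨hu1, hc⟩
      · exact Or.inl ⟨huB, hc.le, by linarith⟩
    refine le_trans (measure_mono hsub) (le_trans (measure_union_le _ _) ?_)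
    gcongr
    rw [Real.volume_Icc]
    exact ENNReal.ofReal_le_ofReal (by linarith)
  refine le_antisymm ?_ ?_
  · rw [eDen, eDen, h1]
    exact limsup_div_le_of_le_add _ _ _ ENNReal.ofReal_ne_top hab
  · rw [eDen, eDen, h1]
    exact limsup_div_le_of_le_add _ _ _ ENNReal.ofReal_ne_top hba

end Flow

lemma maximal {X : Type*} [MeasurableSpace X] {μ : Measure X} [IsProbabilityMeasure μ]
    {U : ℝ → X → X}
    (hUmp : ∀ t, MeasurePreserving (U t) μ μ)
    (hUadd : ∀ t u, U (t + u) = U t ∘ U u)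
    (hUmeas : Measurable fun p : ℝ × X => U p.1 p.2)
    {E : Set X} (hE : MeasurableSet E) :
    ∫⁻ x, eDen {t : ℝ | U t x ∈ E} ∂μ ≤ μ E := by
  classical
  set F : X → ℝ≥0∞ := fun x => eDen {t : ℝ | U t x ∈ E} with hF
  have hFmeas : Measurable F := meas_eDen hUmeas hE
  have hFle : ∀ x, F x ≤ 1 := fun x => eDen_le_one _
  refine ENNReal.le_of_forall_pos_le_add fun δ hδ _ => ?_
  have hδ0 : (δ : ℝ≥0∞) ≠ 0 := by exact_mod_cast hδ.ne'
  have hFδmeas : Measurable fun x => F x - (δ : ℝ≥0∞) := hFmeas.sub measurable_const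
  have hFδle : ∀ x, F x - (δ : ℝ≥0∞) ≤ 1 := fun x => le_trans tsub_le_self (hFle x)
  suffices hsuff : ∫⁻ x, (F x - (δ : ℝ≥0∞)) ∂μ ≤ μ E by
    calc ∫⁻ x, F x ∂μ ≤ ∫⁻ x, ((F x - (δ : ℝ≥0∞)) + δ) ∂μ :=
          lintegral_mono fun x => le_tsub_add
      _ = ∫⁻ x, (F x - (δ : ℝ≥0∞)) ∂μ + (δ : ℝ≥0∞) * μ Set.univ := by
          rw [lintegral_add_right _ measurable_const, lintegral_const]
      _ ≤ μ E + δ := by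
          rw [measure_univ, mul_one]
          exact add_le_add_left hsuff _
  set A : ℕ → Set X := fun M => {y | ∃ J : ℕ, 1 ≤ J ∧ J ≤ M ∧
      (F y - (δ : ℝ≥0∞)) * J ≤ volume ({t : ℝ | U t y ∈ E} ∩ Icc (0 : ℝ) J)} with hA
  have hAmeas : ∀ M, MeasurableSet (A M) := by
    intro M
    have hrw : A M = ⋃ J : ℕ, ⋃ (_ : 1 ≤ J), ⋃ (_ : J ≤ M),
        {y | (F y - (δ : ℝ≥0∞)) * J ≤ volume ({t : ℝ | U t y ∈ E} ∩ Icc (0 : ℝ) J)} := by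
      ext y
      simp only [hA, mem_setOf_eq, mem_iUnion]
      tauto
    rw [hrw]
    refine MeasurableSet.iUnion fun J => MeasurableSet.iUnion fun _ =>
      MeasurableSet.iUnion fun _ => ?_
    exact measurableSet_le (hFδmeas.mul_const _) (meas_vol hUmeas hE _)
  have hAmono : Monotone A := by
    intro M M' hMM' y hy
    obtain ⟨J, h1, h2, h3⟩ := hy
    exact ⟨J, h1, le_trans h2 hMM', h3⟩
  have hAunion : (⋃ M, A M) = Set.univ := by
    refine Set.eq_univ_of_forall fun y => mem_iUnion.2 ?_
    by_cases hy : F y ≤ (δ : ℝ≥0∞)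
    · refine ⟨1, 1, le_rfl, le_rfl, ?_⟩
      have h0 : F y - (δ : ℝ≥0∞) = 0 := tsub_eq_zero_of_le hy
      simp [h0]
    · push_neg at hy
      have hFy0 : F y ≠ 0 := by
        intro h0
        rw [h0] at hy
        exact absurd hy (by simp)
      have hFytop : F y ≠ ⊤ := (lt_of_le_of_lt (hFle y) ENNReal.one_lt_top).ne
      have hlt : F y - (δ : ℝ≥0∞) < F y := ENNReal.sub_lt_self hFytop hFy0 hδ0
      have hlt' : F y - (δ : ℝ≥0∞) < Filter.limsup
          (fun J : ℕ => volume ({t : ℝ | U t y ∈ E} ∩ Icc (0 : ℝ) J) / (J : ℝ≥0∞))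
          Filter.atTop := hlt
      have hfreq := Filter.frequently_lt_of_lt_limsup (by isBoundedDefault) hlt'
      obtain ⟨J, hJlt, hJ1⟩ := (hfreq.and_eventually (Filter.eventually_ge_atTop 1)).exists
      refine ⟨J, J, hJ1, le_rfl, ?_⟩
      have hJ0 : (J : ℝ≥0∞) ≠ 0 := by
        simpa using Nat.one_le_iff_ne_zero.1 hJ1
      exact (ENNReal.le_div_iff_mul_le (Or.inl hJ0)
        (Or.inl (ENNReal.natCast_ne_top J))).1 hJlt.le
  have main : ∀ L M : ℕ,
      (∫⁻ x, (F x - (δ : ℝ≥0∞)) ∂μ) * (L : ℝ≥0∞)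
        ≤ ENNReal.ofReal ((L : ℝ) + M + 1) * μ E + (L : ℝ≥0∞) * μ ((A M)ᶜ) := by
    intro L M
    have hpt : ∀ x, (F x - (δ : ℝ≥0∞)) * (L : ℝ≥0∞) ≤
        volume ({t : ℝ | U t x ∈ E} ∩ Icc (0 : ℝ) ((L : ℝ) + M + 1))
        + volume ({t : ℝ | U t x ∈ (A M)ᶜ} ∩ Icc (0 : ℝ) L) := by
      intro x
      set B : Set ℝ := {t : ℝ | U t x ∈ E} with hBdef
      set S : Set ℝ := {t : ℝ | t ∈ Icc (0 : ℝ) (L : ℝ) ∧ U t x ∈ A M} with hSdef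
      have hcover : (F x - (δ : ℝ≥0∞)) * volume S
          ≤ volume (B ∩ Icc (0 : ℝ) ((L : ℝ) + M + 1)) := by
        refine cover_lemma B S ((measurable_sect hUmeas x) hE) _ (hFδle x) M L ?_
        rintro t ⟨⟨ht0, htL⟩, htA⟩
        refine ⟨ht0, htL, ?_⟩
        obtain ⟨J, hJ1, hJM, hJle⟩ := htA
        refine ⟨J, hJ1, hJM, ?_⟩
        have hFinv : F (U t x) = F x := eDen_inv hUadd x t ht0
        have hvol := vol_shift hUadd (D := E) x t (J : ℝ)
        rw [hFinv, hvol] at hJle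
        exact hJle
      have hL : ENNReal.ofReal (L : ℝ)
          ≤ volume S + volume ({t : ℝ | U t x ∈ (A M)ᶜ} ∩ Icc (0 : ℝ) L) := by
        have hsub : Icc (0 : ℝ) (L : ℝ)
            ⊆ S ∪ ({t : ℝ | U t x ∈ (A M)ᶜ} ∩ Icc (0 : ℝ) L) := by
          intro t ht
          by_cases htA : U t x ∈ A M
          · exact Or.inl ⟨ht, htA⟩
          · exact Or.inr ⟨htA, ht⟩
        calc ENNReal.ofReal (L : ℝ) = volume (Icc (0 : ℝ) (L : ℝ)) := by
              rw [Real.volume_Icc]; congr 1; ring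
          _ ≤ _ := le_trans (measure_mono hsub) (measure_union_le _ _)
      calc (F x - (δ : ℝ≥0∞)) * (L : ℝ≥0∞)
          = (F x - (δ : ℝ≥0∞)) * ENNReal.ofReal (L : ℝ) := by rw [ENNReal.ofReal_natCast]
        _ ≤ (F x - (δ : ℝ≥0∞)) * (volume S
            + volume ({t : ℝ | U t x ∈ (A M)ᶜ} ∩ Icc (0 : ℝ) L)) := mul_le_mul_right hL _
        _ = (F x - (δ : ℝ≥0∞)) * volume S
            + (F x - (δ : ℝ≥0∞)) * volume ({t : ℝ | U t x ∈ (A M)ᶜ} ∩ Icc (0 : ℝ) L) :=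
            mul_add _ _ _
        _ ≤ volume (B ∩ Icc (0 : ℝ) ((L : ℝ) + M + 1))
            + 1 * volume ({t : ℝ | U t x ∈ (A M)ᶜ} ∩ Icc (0 : ℝ) L) :=
            add_le_add hcover (mul_le_mul_left (hFδle x) _)
        _ = _ := by rw [one_mul]
    calc (∫⁻ x, (F x - (δ : ℝ≥0∞)) ∂μ) * (L : ℝ≥0∞)
        = ∫⁻ x, (F x - (δ : ℝ≥0∞)) * (L : ℝ≥0∞) ∂μ := (lintegral_mul_const _ hFδmeas).symm
      _ ≤ ∫⁻ x, (volume ({t : ℝ | U t x ∈ E} ∩ Icc (0 : ℝ) ((L : ℝ) + M + 1))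
          + volume ({t : ℝ | U t x ∈ (A M)ᶜ} ∩ Icc (0 : ℝ) L)) ∂μ := lintegral_mono hpt
      _ = (∫⁻ x, volume ({t : ℝ | U t x ∈ E} ∩ Icc (0 : ℝ) ((L : ℝ) + M + 1)) ∂μ)
          + ∫⁻ x, volume ({t : ℝ | U t x ∈ (A M)ᶜ} ∩ Icc (0 : ℝ) L) ∂μ :=
          lintegral_add_left (meas_vol hUmeas hE _) _
      _ = ENNReal.ofReal ((L : ℝ) + M + 1) * μ E + ENNReal.ofReal (L : ℝ) * μ ((A M)ᶜ) := by
          rw [fubini_flow hUmp hUmeas hE _ (by positivity),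
            fubini_flow hUmp hUmeas (hAmeas M).compl _ (by positivity)]
      _ = ENNReal.ofReal ((L : ℝ) + M + 1) * μ E + (L : ℝ≥0∞) * μ ((A M)ᶜ) := by
          rw [ENNReal.ofReal_natCast]
  refine ENNReal.le_of_forall_pos_le_add fun γ hγ _ => ?_
  have hμtend : Filter.Tendsto (fun M => μ (A M)) Filter.atTop (nhds (μ (⋃ M, A M))) :=
    tendsto_measure_iUnion_atTop hAmono
  rw [hAunion, measure_univ] at hμtend
  set γ2 : ℝ≥0∞ := (γ : ℝ≥0∞) / 2 with hγ2
  have hγ2pos : 0 < γ2 := ENNReal.div_pos (by exact_mod_cast hγ.ne') (by simp)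
  have hγ2top : γ2 ≠ ⊤ := by
    rw [hγ2]
    exact (ENNReal.div_lt_top ENNReal.coe_ne_top (by simp)).ne
  have hM : ∃ M : ℕ, μ ((A M)ᶜ) ≤ γ2 := by
    by_cases h1 : 1 ≤ γ2
    · exact ⟨1, le_trans prob_le_one h1⟩
    · have hlt : (1 : ℝ≥0∞) - γ2 < 1 :=
        ENNReal.sub_lt_self ENNReal.one_ne_top one_ne_zero hγ2pos.ne'
      obtain ⟨M, hMlt⟩ := (hμtend.eventually_const_lt hlt).exists
      refine ⟨M, ?_⟩
      rw [measure_compl (hAmeas M) (lt_of_le_of_lt prob_le_one ENNReal.one_lt_top).ne,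
        measure_univ]
      rw [tsub_le_iff_right]
      have := hMlt.le
      rw [tsub_le_iff_left] at this
      exact this
  obtain ⟨M, hMc⟩ := hM
  have hquot : ∃ L : ℕ, 1 ≤ L ∧ ENNReal.ofReal ((M : ℝ) + 1) / L ≤ γ2 := by
    have hfin : ENNReal.ofReal ((M : ℝ) + 1) / γ2 ≠ ⊤ :=
      (ENNReal.div_lt_top ENNReal.ofReal_ne_top hγ2pos.ne').ne
    obtain ⟨n, hn⟩ := ENNReal.exists_nat_gt hfin
    refine ⟨max n 1, le_max_right _ _, ?_⟩
    refine ENNReal.div_le_of_le_mul ?_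
    have h1 : ENNReal.ofReal ((M : ℝ) + 1) < (n : ℝ≥0∞) * γ2 := by
      rw [← ENNReal.div_lt_iff (Or.inl hγ2pos.ne') (Or.inl hγ2top)]
      exact hn
    refine le_trans h1.le ?_
    rw [mul_comm]
    gcongr
    exact_mod_cast le_max_left n 1
  obtain ⟨L, hL1, hLle⟩ := hquot
  have hL0 : (L : ℝ≥0∞) ≠ 0 := by simpa using Nat.one_le_iff_ne_zero.1 hL1
  have hLtop : (L : ℝ≥0∞) ≠ ⊤ := ENNReal.natCast_ne_top L
  have ha : ∫⁻ x, (F x - (δ : ℝ≥0∞)) ∂μ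
      ≤ (ENNReal.ofReal ((L : ℝ) + M + 1) * μ E + (L : ℝ≥0∞) * μ ((A M)ᶜ)) / L :=
    (ENNReal.le_div_iff_mul_le (Or.inl hL0) (Or.inl hLtop)).2 (main L M)
  refine le_trans ha ?_
  have hsplit : ENNReal.ofReal ((L : ℝ) + M + 1)
      = (L : ℝ≥0∞) + ENNReal.ofReal ((M : ℝ) + 1) := by
    rw [← ENNReal.ofReal_natCast L, ← ENNReal.ofReal_add (by positivity) (by positivity)]
    congr 1
    ring
  rw [hsplit, add_mul, ENNReal.add_div, ENNReal.add_div]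
  have hterm1 : (L : ℝ≥0∞) * μ E / L = μ E := by
    rw [mul_comm, mul_div_assoc, ENNReal.div_self hL0 hLtop, mul_one]
  have hterm3 : (L : ℝ≥0∞) * μ ((A M)ᶜ) / L ≤ γ2 := by
    rw [mul_comm, mul_div_assoc, ENNReal.div_self hL0 hLtop, mul_one]
    exact hMc
  have hterm2 : ENNReal.ofReal ((M : ℝ) + 1) * μ E / L ≤ γ2 := by
    refine le_trans ?_ hLle
    gcongr
    exact mul_le_of_le_one_right' prob_le_one
  calc (L : ℝ≥0∞) * μ E / L + ENNReal.ofReal ((M : ℝ) + 1) * μ E / L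
        + (L : ℝ≥0∞) * μ ((A M)ᶜ) / L
      ≤ μ E + γ2 + γ2 := by
        rw [hterm1]
        exact add_le_add (add_le_add le_rfl hterm2) hterm3
    _ = μ E + γ := by rw [add_assoc, hγ2, ENNReal.add_halves]



theorem stmt14 (s : ℕ → ℝ) (hs : ∀ n, 0 < s n)
    (ε : ℝ) (hε : ε ∈ Set.Ioo (0 : ℝ) 1) (P₀ : ℕ) (hP₀ : 0 < P₀) (C : ℝ)
    (h : ∀ P : ℕ, ∀ E : Set ℝ, MeasurableSet E →
      upperDensity {t : ℝ | ∃ N : ℕ, P₀ ≤ N ∧ N ≤ P ∧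
          1 - ε ≤ (1 / (N : ℝ)) *
            ∑ n ∈ Finset.Icc 1 N, Set.indicator E (fun _ => (1 : ℝ)) (s n + t)}
        ≤ C * upperDensity E)
    (X : Type*) [MeasurableSpace X] (μ : Measure X) [IsProbabilityMeasure μ]
    (U : ℝ → X → X) (hUmp : ∀ t, MeasurePreserving (U t) μ μ)
    (hU0 : U 0 = id) (hUadd : ∀ t u, U (t + u) = U t ∘ U u)
    (hUmeas : Measurable fun p : ℝ × X => U p.1 p.2)
    (E : Set X) (hE : MeasurableSet E) (P : ℕ) :
    μ {x : X | ∃ N : ℕ, P₀ ≤ N ∧ N ≤ P ∧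
        1 - ε ≤ (1 / (N : ℝ)) *
          ∑ n ∈ Finset.Icc 1 N, Set.indicator E (fun _ => (1 : ℝ)) (U (s n) x)}
      ≤ ENNReal.ofReal C * μ E := by
  classical
  open Filter Set in
  by_cases hPP : P < P₀
  · have hempty : {x : X | ∃ N : ℕ, P₀ ≤ N ∧ N ≤ P ∧
        1 - ε ≤ (1 / (N : ℝ)) *
          ∑ n ∈ Finset.Icc 1 N, Set.indicator E (fun _ => (1 : ℝ)) (U (s n) x)} = ∅ := by
      ext x
      simp only [Set.mem_setOf_eq, Set.mem_empty_iff_false, iff_false]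
      rintro ⟨N, h1, h2, _⟩
      omega
    rw [hempty, measure_empty]
    exact zero_le
  push_neg at hPP
  -- C ≥ 1 from E = univ
  have hud_univ : upperDensity Set.univ = 1 := by
    have hev : ∀ᶠ J : ℕ in Filter.atTop,
        (volume (Set.univ ∩ Set.Icc (0 : ℝ) J)).toReal / (J : ℝ) = 1 := by
      filter_upwards [Filter.eventually_ge_atTop 1] with J hJ
      have hJ1 : (1 : ℝ) ≤ (J : ℝ) := by exact_mod_cast hJ
      rw [Set.univ_inter, Real.volume_Icc, ENNReal.toReal_ofReal (by linarith), sub_zero,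
        div_self (by linarith)]
    rw [upperDensity, Filter.limsup_congr hev, Filter.limsup_const]
  have hset_univ : {t : ℝ | ∃ N : ℕ, P₀ ≤ N ∧ N ≤ P ∧
      1 - ε ≤ (1 / (N : ℝ)) *
        ∑ n ∈ Finset.Icc 1 N, Set.indicator Set.univ (fun _ => (1 : ℝ)) (s n + t)}
      = Set.univ := by
    refine Set.eq_univ_of_forall fun t => ?_
    refine ⟨P₀, le_rfl, hPP, ?_⟩
    have hsum : ∑ n ∈ Finset.Icc 1 P₀, Set.indicator Set.univ (fun _ => (1 : ℝ)) (s n + t)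
        = (P₀ : ℝ) := by
      simp [Set.indicator_univ, Nat.card_Icc]
    rw [hsum]
    have hP₀r : (0 : ℝ) < (P₀ : ℝ) := by exact_mod_cast hP₀
    rw [one_div, inv_mul_cancel₀ hP₀r.ne']
    linarith [hε.1]
  have hC1 : (1 : ℝ) ≤ C := by
    have hh := h P Set.univ MeasurableSet.univ
    rw [hset_univ, hud_univ, mul_one] at hh
    exact hh
  have hC0 : (0 : ℝ) ≤ C := le_trans zero_le_one hC1
  set G : Set X := {x : X | ∃ N : ℕ, P₀ ≤ N ∧ N ≤ P ∧
      1 - ε ≤ (1 / (N : ℝ)) *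
        ∑ n ∈ Finset.Icc 1 N, Set.indicator E (fun _ => (1 : ℝ)) (U (s n) x)} with hG
  have hgmeas : ∀ N : ℕ, Measurable fun x : X => (1 / (N : ℝ)) *
      ∑ n ∈ Finset.Icc 1 N, Set.indicator E (fun _ => (1 : ℝ)) (U (s n) x) := by
    intro N
    refine Measurable.const_mul ?_ _
    refine Finset.measurable_sum _ fun n _ => ?_
    exact (measurable_const.indicator hE).comp (hUmp (s n)).measurable
  have hGmeas : MeasurableSet G := by
    have hrw : G = ⋃ N : ℕ, ⋃ (_ : P₀ ≤ N), ⋃ (_ : N ≤ P),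
        {x : X | 1 - ε ≤ (1 / (N : ℝ)) *
          ∑ n ∈ Finset.Icc 1 N, Set.indicator E (fun _ => (1 : ℝ)) (U (s n) x)} := by
      ext x
      simp only [hG, Set.mem_setOf_eq, Set.mem_iUnion]
      tauto
    rw [hrw]
    refine MeasurableSet.iUnion fun N => MeasurableSet.iUnion fun _ =>
      MeasurableSet.iUnion fun _ => ?_
    exact measurableSet_le measurable_const (hgmeas N)
  have hBmeas : ∀ x : X, MeasurableSet {w : ℝ | U w x ∈ E} :=
    fun x => (measurable_sect hUmeas x) hE
  have hsetid : ∀ x : X, {t : ℝ | U t x ∈ G} = {t : ℝ | ∃ N : ℕ, P₀ ≤ N ∧ N ≤ P ∧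
      1 - ε ≤ (1 / (N : ℝ)) *
        ∑ n ∈ Finset.Icc 1 N,
          Set.indicator {w : ℝ | U w x ∈ E} (fun _ => (1 : ℝ)) (s n + t)} := by
    intro x
    ext t
    simp only [hG, Set.mem_setOf_eq]
    refine exists_congr fun N => and_congr_right fun _ => and_congr_right fun _ => ?_
    have hsum : ∑ n ∈ Finset.Icc 1 N, Set.indicator E (fun _ => (1 : ℝ)) (U (s n) (U t x))
        = ∑ n ∈ Finset.Icc 1 N,
            Set.indicator {w : ℝ | U w x ∈ E} (fun _ => (1 : ℝ)) (s n + t) := by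
      refine Finset.sum_congr rfl fun n _ => ?_
      have hc : U (s n) (U t x) = U (s n + t) x := by rw [hUadd (s n) t]; rfl
      by_cases hmem : U (s n + t) x ∈ E
      · rw [hc, Set.indicator_of_mem hmem, Set.indicator_of_mem (by exact hmem)]
      · rw [hc, Set.indicator_of_notMem hmem, Set.indicator_of_notMem (by exact hmem)]
    rw [hsum]
  have hpt : ∀ x : X, eDen {t : ℝ | U t x ∈ G}
      ≤ ENNReal.ofReal C * eDen {w : ℝ | U w x ∈ E} := by
    intro x
    rw [eDen_eq_ofReal, eDen_eq_ofReal]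
    have hhx := h P {w : ℝ | U w x ∈ E} (hBmeas x)
    rw [hsetid x]
    calc ENNReal.ofReal (upperDensity {t : ℝ | ∃ N : ℕ, P₀ ≤ N ∧ N ≤ P ∧
          1 - ε ≤ (1 / (N : ℝ)) *
            ∑ n ∈ Finset.Icc 1 N,
              Set.indicator {w : ℝ | U w x ∈ E} (fun _ => (1 : ℝ)) (s n + t)})
        ≤ ENNReal.ofReal (C * upperDensity {w : ℝ | U w x ∈ E}) :=
          ENNReal.ofReal_le_ofReal hhx
      _ = ENNReal.ofReal C * ENNReal.ofReal (upperDensity {w : ℝ | U w x ∈ E}) :=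
          ENNReal.ofReal_mul hC0
  have hfJmeas : ∀ J : ℕ, Measurable fun x : X =>
      volume ({t : ℝ | U t x ∈ G} ∩ Set.Icc (0 : ℝ) J) / (J : ℝ≥0∞) :=
    fun J => (meas_vol hUmeas hGmeas _).div_const _
  have hint : ∀ J : ℕ, 1 ≤ J →
      (∫⁻ x, volume ({t : ℝ | U t x ∈ G} ∩ Set.Icc (0 : ℝ) J) / (J : ℝ≥0∞) ∂μ) = μ G := by
    intro J hJ
    have hJ0 : (J : ℝ≥0∞) ≠ 0 := by simpa using Nat.one_le_iff_ne_zero.1 hJ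
    have hJtop : (J : ℝ≥0∞) ≠ ⊤ := ENNReal.natCast_ne_top J
    calc (∫⁻ x, volume ({t : ℝ | U t x ∈ G} ∩ Set.Icc (0 : ℝ) J) / (J : ℝ≥0∞) ∂μ)
        = (∫⁻ x, volume ({t : ℝ | U t x ∈ G} ∩ Set.Icc (0 : ℝ) J) * ((J : ℝ≥0∞))⁻¹ ∂μ) := by
          simp [div_eq_mul_inv]
      _ = (∫⁻ x, volume ({t : ℝ | U t x ∈ G} ∩ Set.Icc (0 : ℝ) J) ∂μ) * ((J : ℝ≥0∞))⁻¹ :=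
          lintegral_mul_const _ (meas_vol hUmeas hGmeas _)
      _ = (ENNReal.ofReal (J : ℝ) * μ G) * ((J : ℝ≥0∞))⁻¹ := by
          rw [fubini_flow hUmp hUmeas hGmeas (J : ℝ) (by positivity)]
      _ = μ G := by
          rw [ENNReal.ofReal_natCast, mul_comm (J : ℝ≥0∞) (μ G), mul_assoc,
            ENNReal.mul_inv_cancel hJ0 hJtop, mul_one]
  have hlimsup : μ G = Filter.limsup (fun J : ℕ =>
      ∫⁻ x, volume ({t : ℝ | U t x ∈ G} ∩ Set.Icc (0 : ℝ) J) / (J : ℝ≥0∞) ∂μ)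
      Filter.atTop := by
    have hev : ∀ᶠ J : ℕ in Filter.atTop,
        (∫⁻ x, volume ({t : ℝ | U t x ∈ G} ∩ Set.Icc (0 : ℝ) J) / (J : ℝ≥0∞) ∂μ) = μ G := by
      filter_upwards [Filter.eventually_ge_atTop 1] with J hJ
      exact hint J hJ
    rw [Filter.limsup_congr hev, Filter.limsup_const]
  calc μ G = Filter.limsup (fun J : ℕ =>
        ∫⁻ x, volume ({t : ℝ | U t x ∈ G} ∩ Set.Icc (0 : ℝ) J) / (J : ℝ≥0∞) ∂μ)
        Filter.atTop := hlimsup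
    _ ≤ ∫⁻ x, Filter.limsup (fun J : ℕ =>
        volume ({t : ℝ | U t x ∈ G} ∩ Set.Icc (0 : ℝ) J) / (J : ℝ≥0∞)) Filter.atTop ∂μ :=
        MeasureTheory.limsup_lintegral_le (fun _ => (1 : ℝ≥0∞)) hfJmeas
          (fun J => Filter.Eventually.of_forall fun x => eDen_term_le_one _ J)
          (by simp)
    _ = ∫⁻ x, eDen {t : ℝ | U t x ∈ G} ∂μ := rfl
    _ ≤ ∫⁻ x, ENNReal.ofReal C * eDen {w : ℝ | U w x ∈ E} ∂μ := lintegral_mono hpt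
    _ = ENNReal.ofReal C * ∫⁻ x, eDen {w : ℝ | U w x ∈ E} ∂μ :=
        lintegral_const_mul _ (meas_eDen hUmeas hE)
    _ ≤ ENNReal.ofReal C * μ E := mul_le_mul_right (maximal hUmp hUadd hUmeas hE) _
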